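/- Let Re μ < 1/2, ν ∈ (Re μ, 1/2), and suppose f : (0,∞) → ℂ satisfies ∫₀^∞ |f(x)| x^{-ν} dx < ∞. Define (Ff)(τ) = √π Γ(1+iτ-μ) Γ(1-iτ-μ) ∫₀^∞ P^μ_{iτ}(√(1+x)) P^μ_{-iτ}(√(1+x)) f(x)/√(1+x) dx. Then Ff is well-defined and bounded on (0,∞), and sup_{τ>0} |(Ff)(τ)| ≤ C_{μ,ν} ‖f‖_{1-ν,1}, where C_{μ,ν} = (2^{-2ν}/(π√π)) B(1-ν,1-ν) ∫_{ν-i∞}^{ν+i∞} |Γ(3/2-s)Γ(1/2-s)Γ(s-μ)/Γ(1-s-μ)| |ds| and ‖f‖_{1-ν,1} = ∫₀^∞ |f(x)| x^{-ν} dx. -/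

import Mathlib

open MeasureTheory Set Complex

/-- `‖Γ(s)‖ ≤ Γ(Re s)` for `Re s > 0`. -/
lemma norm_Gamma_le {s : ℂ} (hs : 0 < s.re) : ‖Complex.Gamma s‖ ≤ Real.Gamma s.re := by
  rw [Complex.Gamma_eq_integral hs, Real.Gamma_eq_integral hs, Complex.GammaIntegral]
  refine (norm_integral_le_integral_norm _).trans_eq ?_
  refine setIntegral_congr_fun measurableSet_Ioi (fun x hx => ?_)
  simp only [norm_mul]
  rw [Complex.norm_real, Real.norm_eq_abs, abs_of_pos (Real.exp_pos _),
    Complex.norm_cpow_eq_rpow_re_of_pos hx, Complex.sub_re, Complex.one_re]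


lemma ae_ne_one : ∀ᵐ x : ℝ, x ≠ 1 := by
  have : (volume ({1} : Set ℝ)) = 0 := measure_singleton 1
  filter_upwards [measure_eq_zero_iff_ae_notMem.mp this] with x hx
  simpa using hx

/-- The real Beta integral value. -/
lemma real_beta_integral {p q : ℝ} (hp : 0 < p) (hq : 0 < q) :
    ∫ x in (0:ℝ)..1, x ^ (p-1) * (1-x) ^ (q-1) =
      Real.Gamma p * Real.Gamma q / Real.Gamma (p + q) := by
  have h := Complex.Gamma_mul_Gamma_eq_betaIntegral (s := (p:ℂ)) (t := (q:ℂ))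
    (by simpa using hp) (by simpa using hq)
  have hne : Complex.Gamma ((p:ℂ) + q) ≠ 0 :=
    Complex.Gamma_ne_zero_of_re_pos (by simpa using add_pos hp hq)
  have hbeta : Complex.betaIntegral (p:ℂ) (q:ℂ) =
      ((∫ x in (0:ℝ)..1, x ^ (p-1) * (1-x) ^ (q-1) : ℝ) : ℂ) := by
    rw [Complex.betaIntegral, ← intervalIntegral.integral_ofReal]
    refine intervalIntegral.integral_congr_ae ?_
    filter_upwards [ae_ne_one] with x hx1 hx
    rw [Set.uIoc_of_le (by norm_num : (0:ℝ) ≤ 1)] at hx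
    have hx0 : 0 < x := hx.1
    have hx1' : 0 ≤ 1 - x := by
      rcases lt_or_eq_of_le hx.2 with h | h
      · linarith
      · exact absurd h hx1
    rw [Complex.ofReal_mul, Complex.ofReal_cpow hx0.le, Complex.ofReal_cpow hx1',
      Complex.ofReal_sub, Complex.ofReal_one]
    push_cast
    ring
  rw [hbeta] at h
  have := congrArg Complex.re h
  rw [← Complex.ofReal_add, Complex.Gamma_ofReal, Complex.Gamma_ofReal, Complex.Gamma_ofReal] at this
  rw [← Complex.ofReal_mul, ← Complex.ofReal_mul, Complex.ofReal_re, Complex.ofReal_re] at this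
  field_simp at this ⊢
  linarith [this]


lemma norm_betaIntegral_le {u v : ℂ} (hu : 0 < u.re) (hv : 0 < v.re) :
    ‖Complex.betaIntegral u v‖ ≤
      Real.Gamma u.re * Real.Gamma v.re / Real.Gamma (u.re + v.re) := by
  rw [Complex.betaIntegral]
  refine (intervalIntegral.norm_integral_le_abs_integral_norm).trans ?_
  rw [← real_beta_integral hu hv]
  have hcong : ∫ x in (0:ℝ)..1, ‖(x:ℂ) ^ (u-1) * (1-(x:ℂ)) ^ (v-1)‖ =
      ∫ x in (0:ℝ)..1, x ^ (u.re-1) * (1-x) ^ (v.re-1) := by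
    refine intervalIntegral.integral_congr_ae ?_
    filter_upwards [ae_ne_one] with x hx1 hx
    rw [Set.uIoc_of_le (by norm_num : (0:ℝ) ≤ 1)] at hx
    have hx0 : 0 < x := hx.1
    have hx1' : 0 < 1 - x := by
      rcases lt_or_eq_of_le hx.2 with h | h
      · linarith
      · exact absurd h hx1
    rw [norm_mul,
      Complex.norm_cpow_eq_rpow_re_of_pos hx0]
    have : ((1:ℂ) - (x:ℂ)) = ((1 - x : ℝ) : ℂ) := by push_cast; ring
    rw [this, Complex.norm_cpow_eq_rpow_re_of_pos hx1']
    simp [Complex.sub_re]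
  rw [hcong]
  rw [_root_.abs_of_nonneg (intervalIntegral.integral_nonneg (by norm_num) (fun x hx =>
    mul_nonneg (Real.rpow_nonneg hx.1 _) (Real.rpow_nonneg (by linarith [hx.2]) _)))]

lemma norm_Gamma_mul_le {u v : ℂ} (hu : 0 < u.re) (hv : 0 < v.re) :
    ‖Complex.Gamma u‖ * ‖Complex.Gamma v‖ ≤
      ‖Complex.Gamma (u+v)‖ *
        (Real.Gamma u.re * Real.Gamma v.re / Real.Gamma (u.re + v.re)) := by
  rw [← norm_mul, Complex.Gamma_mul_Gamma_eq_betaIntegral hu hv, norm_mul]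
  exact mul_le_mul_of_nonneg_left (norm_betaIntegral_le hu hv) (norm_nonneg _)


lemma Gamma_half_norm_sq (u : ℝ) :
    ‖Complex.Gamma (1/2 + u*I)‖^2 = Real.pi / Real.cosh (Real.pi * u) := by
  have h := Complex.Gamma_mul_Gamma_one_sub ((1:ℂ)/2 + u*I)
  have h1 : (1:ℂ) - ((1:ℂ)/2 + u*I) = (starRingEnd ℂ) ((1:ℂ)/2 + u*I) := by
    apply Complex.ext <;> simp <;> norm_num
  rw [h1, Complex.Gamma_conj, Complex.mul_conj] at h
  have h2 : (↑Real.pi * ((1:ℂ)/2 + u*I)) = ((Real.pi/2 : ℝ):ℂ) + ((Real.pi * u : ℝ):ℂ) * I := by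
    push_cast; ring
  rw [h2, Complex.sin_add, Complex.cos_mul_I, Complex.sin_mul_I] at h
  have h3 : Complex.sin ((Real.pi/2 : ℝ):ℂ) = 1 := by
    rw [show ((Real.pi/2 : ℝ):ℂ) = (Real.pi:ℂ)/2 by push_cast; ring, Complex.sin_pi_div_two]
  have h4 : Complex.cos ((Real.pi/2 : ℝ):ℂ) = 0 := by
    rw [show ((Real.pi/2 : ℝ):ℂ) = (Real.pi:ℂ)/2 by push_cast; ring, Complex.cos_pi_div_two]
  rw [h3, h4] at h
  simp only [one_mul, zero_mul, add_zero] at h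
  rw [Complex.normSq_eq_norm_sq, ← Complex.ofReal_cosh] at h
  have h5 : ((Real.pi:ℂ) / ((Real.cosh (Real.pi*u) : ℝ):ℂ)) =
      ((Real.pi / Real.cosh (Real.pi*u) : ℝ):ℂ) := by push_cast; ring
  rw [h5] at h
  exact_mod_cast h

lemma Gamma_half_lower (u : ℝ) :
    Real.sqrt Real.pi * Real.exp (-(Real.pi * |u|) / 2) ≤ ‖Complex.Gamma (1/2 + u*I)‖ := by
  have hcosh : Real.cosh (Real.pi * u) ≤ Real.exp (Real.pi * |u|) := by
    rw [Real.cosh_eq]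
    have h1 : Real.exp (Real.pi * u) ≤ Real.exp (Real.pi * |u|) :=
      Real.exp_le_exp.2 (by cases abs_cases u with
        | inl h => rw [h.1] | inr h => nlinarith [Real.pi_pos, abs_nonneg u, neg_abs_le u])
    have h2 : Real.exp (-(Real.pi * u)) ≤ Real.exp (Real.pi * |u|) :=
      Real.exp_le_exp.2 (by cases abs_cases u with
        | inl h => nlinarith [Real.pi_pos] | inr h => nlinarith [Real.pi_pos])
    linarith
  have hc : 0 < Real.cosh (Real.pi * u) := Real.cosh_pos _
  have hsq : (Real.sqrt Real.pi * Real.exp (-(Real.pi * |u|) / 2))^2 ≤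
      ‖Complex.Gamma (1/2 + u*I)‖^2 := by
    rw [Gamma_half_norm_sq, mul_pow, Real.sq_sqrt Real.pi_pos.le]
    have he : (Real.exp (-(Real.pi * |u|) / 2))^2 = Real.exp (-(Real.pi * |u|)) := by
      rw [sq, ← Real.exp_add]; ring_nf
    rw [he, div_eq_mul_inv]
    refine mul_le_mul_of_nonneg_left ?_ Real.pi_pos.le
    rw [Real.exp_neg]
    exact inv_anti₀ hc hcosh
  have h0 : 0 ≤ Real.sqrt Real.pi * Real.exp (-(Real.pi * |u|) / 2) :=
    mul_nonneg (Real.sqrt_nonneg _) (Real.exp_pos _).le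
  nlinarith [norm_nonneg (Complex.Gamma (1/2 + u*I))]

lemma gammaLower {σ : ℝ} (hσ : 0 < σ) :
    ∃ c : ℝ, 0 < c ∧ ∀ u : ℝ,
      c * Real.exp (-(Real.pi * |u|) / 2) / (1+|u|) ≤ ‖Complex.Gamma (σ + u*I)‖ := by
  set B := Real.Gamma (1/2) * Real.Gamma (σ+1/2) / Real.Gamma (1/2 + (σ+1/2)) with hB
  have hBpos : 0 < B := by
    apply div_pos (mul_pos (Real.Gamma_pos_of_pos (by norm_num))
      (Real.Gamma_pos_of_pos (by linarith))) (Real.Gamma_pos_of_pos (by linarith))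
  have hGpos : 0 < Real.Gamma (σ+1/2) := Real.Gamma_pos_of_pos (by linarith)
  set m := max σ 1 with hm
  have hmpos : (0:ℝ) < m := lt_max_of_lt_right one_pos
  refine ⟨Real.Gamma (σ+1/2) * Real.sqrt Real.pi / (B * m), by positivity, fun u => ?_⟩
  have key := norm_Gamma_mul_le (u := (1:ℂ)/2 + u*I) (v := ((σ+1/2 : ℝ):ℂ))
    (by simp) (by simp; linarith)
  have hval : ‖Complex.Gamma (((σ+1/2 : ℝ):ℂ))‖ = Real.Gamma (σ+1/2) := by
    rw [Complex.Gamma_ofReal, Complex.norm_real, Real.norm_eq_abs, abs_of_pos hGpos]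
  have hre1 : ((1:ℂ)/2 + u*I).re = 1/2 := by simp
  have hre2 : (((σ+1/2 : ℝ):ℂ)).re = σ+1/2 := by simp
  have hsum : (1:ℂ)/2 + u*I + ((σ+1/2 : ℝ):ℂ) = ((σ:ℂ) + u*I) + 1 := by push_cast; ring
  rw [hval, hre1, hre2, hsum] at key
  have hzne : ((σ:ℂ) + u*I) ≠ 0 := by
    intro h
    have := congrArg Complex.re h
    simp at this; linarith
  rw [Complex.Gamma_add_one _ hzne, norm_mul] at key
  have hnz : ‖(σ:ℂ) + u*I‖ ≤ m * (1+|u|) := by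
    refine (norm_add_le _ _).trans ?_
    have e1 : ‖(σ:ℂ)‖ = σ := by simp [abs_of_pos hσ]
    have e2 : ‖(u:ℂ)*I‖ = |u| := by simp
    rw [e1, e2]
    have hs1 : σ ≤ m := le_max_left _ _
    have hs2 : (1:ℝ) ≤ m := le_max_right _ _
    nlinarith [abs_nonneg u]
  have hGh := Gamma_half_lower u
  have final : Real.Gamma (σ+1/2) * (Real.sqrt Real.pi * Real.exp (-(Real.pi * |u|) / 2)) ≤
      ‖Complex.Gamma ((σ:ℂ) + u*I)‖ * (m * (1+|u|)) * B := by
    calc Real.Gamma (σ+1/2) * (Real.sqrt Real.pi * Real.exp (-(Real.pi * |u|) / 2))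
        ≤ Real.Gamma (σ+1/2) * ‖Complex.Gamma (1/2 + u*I)‖ :=
          mul_le_mul_of_nonneg_left hGh hGpos.le
      _ ≤ ‖(σ:ℂ)+u*I‖ * ‖Complex.Gamma ((σ:ℂ)+u*I)‖ * B := by
          rw [mul_comm (Real.Gamma (σ+1/2))]
          calc ‖Complex.Gamma (1/2 + u*I)‖ * Real.Gamma (σ+1/2)
              ≤ ‖(σ:ℂ)+u*I‖ * ‖Complex.Gamma ((σ:ℂ)+u*I)‖ *
                (Real.Gamma (1/2) * Real.Gamma (σ+1/2) / Real.Gamma (1/2+(σ+1/2))) := key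
            _ = ‖(σ:ℂ)+u*I‖ * ‖Complex.Gamma ((σ:ℂ)+u*I)‖ * B := by rw [hB]
      _ ≤ ‖Complex.Gamma ((σ:ℂ) + u*I)‖ * (m * (1+|u|)) * B := by
          have := mul_le_mul_of_nonneg_right hnz (norm_nonneg (Complex.Gamma ((σ:ℂ)+u*I)))
          nlinarith [norm_nonneg (Complex.Gamma ((σ:ℂ)+u*I)), hBpos]
  rw [div_mul_eq_mul_div, div_div, div_le_iff₀ (by positivity)]
  calc Real.Gamma (σ+1/2) * Real.sqrt Real.pi * Real.exp (-(Real.pi * |u|) / 2)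
      = Real.Gamma (σ+1/2) * (Real.sqrt Real.pi * Real.exp (-(Real.pi * |u|) / 2)) := by ring
    _ ≤ ‖Complex.Gamma ((σ:ℂ) + u*I)‖ * (m * (1+|u|)) * B := final
    _ = ‖Complex.Gamma ((σ:ℂ) + u*I)‖ * (B * m * (1+|u|)) := by ring


lemma norm_sin_ge (x y : ℝ) : Real.sinh |y| ≤ ‖Complex.sin ((x:ℂ) + y*I)‖ := by
  have hs : Complex.sin ((x:ℂ) + y*I) =
      ((Real.sin x * Real.cosh y : ℝ):ℂ) + ((Real.cos x * Real.sinh y : ℝ):ℂ) * I := by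
    rw [Complex.sin_add, Complex.cos_mul_I, Complex.sin_mul_I]
    push_cast
    ring
  have hn : ‖Complex.sin ((x:ℂ) + y*I)‖^2 =
      (Real.sin x * Real.cosh y)^2 + (Real.cos x * Real.sinh y)^2 := by
    rw [hs, ← Complex.normSq_eq_norm_sq, Complex.normSq_add_mul_I]
  have key : (Real.sinh |y|)^2 ≤ ‖Complex.sin ((x:ℂ) + y*I)‖^2 := by
    rw [hn]
    have h1 : (Real.sinh |y|)^2 = (Real.sinh y)^2 := by
      rw [← Real.abs_sinh, _root_.sq_abs]
    rw [h1]
    nlinarith [Real.cosh_sq y, Real.sin_sq_add_cos_sq x, sq_nonneg (Real.sin x),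
      sq_nonneg (Real.cos x), sq_nonneg (Real.sinh y)]
  have h0 : 0 ≤ Real.sinh |y| := Real.sinh_nonneg_iff.mpr (abs_nonneg y)
  nlinarith [norm_nonneg (Complex.sin ((x:ℂ) + y*I))]

lemma sinh_ge {t : ℝ} (h : 1 ≤ t) : Real.exp t / 4 ≤ Real.sinh t := by
  have hprod : Real.exp t * Real.exp (-t) = 1 := by
    rw [← Real.exp_add]; simp
  have h2 : 2 ≤ Real.exp t := by
    have := Real.exp_le_exp.mpr h
    linarith [Real.exp_one_gt_d9]
  rw [Real.sinh_eq]
  nlinarith [Real.exp_pos t, Real.exp_pos (-t)]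

/-- upper bound for `σ ∈ (0,1)` via reflection. -/
lemma gammaUpperBase {σ : ℝ} (h0 : 0 < σ) (h1 : σ < 1) :
    ∃ C : ℝ, 0 < C ∧ ∀ u : ℝ,
      ‖Complex.Gamma (σ + u*I)‖ ≤ C * (1+|u|)^2 * Real.exp (-(Real.pi * |u|) / 2) := by
  obtain ⟨c, hc, hlow⟩ := gammaLower (σ := 1-σ) (by linarith)
  set M := max (Real.Gamma σ * Real.exp (Real.pi/2)) (4*Real.pi/c) with hM
  have hMpos : 0 < M := lt_max_of_lt_right (by positivity)
  refine ⟨M, hMpos, fun u => ?_⟩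
  set E := Real.exp (-(Real.pi * |u|) / 2) with hE
  have hEpos : 0 < E := Real.exp_pos _
  have h1u : (1:ℝ) ≤ (1+|u|) := by simp [abs_nonneg]
  have hsq : (1:ℝ) ≤ (1+|u|)^2 := by nlinarith
  rcases le_or_gt |u| 1 with hu | hu
  · -- small u
    have hb : ‖Complex.Gamma (σ + u*I)‖ ≤ Real.Gamma σ := by
      have := norm_Gamma_le (s := (σ:ℂ) + u*I) (by simp [h0])
      simpa using this
    have hEe : Real.exp (-(Real.pi)/2) ≤ E := by
      rw [hE]
      apply Real.exp_le_exp.2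
      have := Real.pi_pos
      nlinarith
    have hMle : Real.Gamma σ * Real.exp (Real.pi/2) ≤ M := le_max_left _ _
    have step : Real.Gamma σ = (Real.Gamma σ * Real.exp (Real.pi/2)) * Real.exp (-(Real.pi)/2) := by
      rw [mul_assoc, ← Real.exp_add, show Real.pi/2 + -Real.pi/2 = 0 by ring, Real.exp_zero, mul_one]
    calc ‖Complex.Gamma (σ + u*I)‖ ≤ Real.Gamma σ := hb
      _ = (Real.Gamma σ * Real.exp (Real.pi/2)) * Real.exp (-(Real.pi)/2) := step
      _ ≤ M * E := mul_le_mul hMle hEe (Real.exp_pos _).le hMpos.le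
      _ ≤ M * (1+|u|)^2 * E := by nlinarith [hMpos, hEpos, hsq, mul_le_mul_of_nonneg_left hsq hMpos.le, mul_pos hMpos hEpos]
  · -- large u
    set z := (σ:ℂ) + u*I with hz
    have hrefl := Complex.Gamma_mul_Gamma_one_sub z
    have h1z : (1:ℂ) - z = ((1-σ : ℝ):ℂ) + (-u : ℝ)*I := by rw [hz]; push_cast; ring
    have hpz : (Real.pi:ℂ) * z = ((Real.pi*σ : ℝ):ℂ) + ((Real.pi*u : ℝ):ℂ)*I := by
      rw [hz]; push_cast; ring
    set a := Real.exp (Real.pi * |u|) with ha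
    have hsin : Real.sinh (Real.pi * |u|) ≤ ‖Complex.sin ((Real.pi:ℂ) * z)‖ := by
      rw [hpz]
      have := norm_sin_ge (Real.pi*σ) (Real.pi*u)
      rwa [abs_mul, abs_of_pos Real.pi_pos] at this
    have hsinh : a/4 ≤ Real.sinh (Real.pi * |u|) := by
      apply sinh_ge
      nlinarith [Real.pi_gt_three]
    have hsin' : a/4 ≤ ‖Complex.sin ((Real.pi:ℂ) * z)‖ := le_trans hsinh hsin
    have hlow' : c * E / (1+|u|) ≤ ‖Complex.Gamma ((1:ℂ) - z)‖ := by
      rw [h1z]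
      have := hlow (-u)
      rwa [abs_neg] at this
    have hs0 : 0 < ‖Complex.sin ((Real.pi:ℂ) * z)‖ := lt_of_lt_of_le (by positivity) hsin'
    have hn := congrArg norm hrefl
    rw [norm_mul, norm_div, Complex.norm_real, Real.norm_eq_abs,
      abs_of_pos Real.pi_pos, eq_div_iff hs0.ne'] at hn
    -- hn : ‖Γ z‖ * ‖Γ (1-z)‖ * ‖sin (π z)‖ = π
    have kb : (a/4) * (c * E/(1+|u|)) ≤
        ‖Complex.sin ((Real.pi:ℂ) * z)‖ * ‖Complex.Gamma ((1:ℂ) - z)‖ :=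
      mul_le_mul hsin' hlow' (by positivity) (norm_nonneg _)
    have hE1 : E * E * a = 1 := by
      rw [hE, ha, ← Real.exp_add, ← Real.exp_add]
      ring_nf
      exact Real.exp_zero
    have key : Real.pi ≤ M * (1+|u|)^2 * E *
        (‖Complex.sin ((Real.pi:ℂ) * z)‖ * ‖Complex.Gamma ((1:ℂ) - z)‖) := by
      have step1 : M * (1+|u|)^2 * E * ((a/4) * (c * E/(1+|u|))) ≤
          M * (1+|u|)^2 * E * (‖Complex.sin ((Real.pi:ℂ) * z)‖ * ‖Complex.Gamma ((1:ℂ) - z)‖) :=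
        mul_le_mul_of_nonneg_left kb (by positivity)
      have step2 : M * (1+|u|)^2 * E * ((a/4) * (c * E/(1+|u|))) =
          (M*c/4) * (1+|u|) * (E*E*a) := by
        field_simp
      have step3 : (M*c/4) * (1+|u|) * (E*E*a) = (M*c/4) * (1+|u|) := by
        rw [hE1, mul_one]
      have hM4 : 4*Real.pi/c ≤ M := le_max_right _ _
      have step4 : Real.pi ≤ (M*c/4) * (1+|u|) := by
        have h4 : 4*Real.pi/c * c = 4*Real.pi := by field_simp
        have h5 : 4*Real.pi ≤ M*c := by
          calc 4*Real.pi = (4*Real.pi/c)*c := h4.symm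
            _ ≤ M*c := mul_le_mul_of_nonneg_right hM4 hc.le
        nlinarith [h5, h1u, Real.pi_pos]
      linarith [step1, step2 ▸ step3 ▸ step4]
    -- conclude
    have hP : 0 < ‖Complex.sin ((Real.pi:ℂ) * z)‖ * ‖Complex.Gamma ((1:ℂ) - z)‖ :=
      lt_of_lt_of_le (by positivity) kb
    have hfin : ‖Complex.Gamma z‖ *
        (‖Complex.sin ((Real.pi:ℂ) * z)‖ * ‖Complex.Gamma ((1:ℂ) - z)‖) ≤
        M * (1+|u|)^2 * E *
        (‖Complex.sin ((Real.pi:ℂ) * z)‖ * ‖Complex.Gamma ((1:ℂ) - z)‖) := by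
      calc ‖Complex.Gamma z‖ * (‖Complex.sin ((Real.pi:ℂ) * z)‖ * ‖Complex.Gamma ((1:ℂ) - z)‖)
          = ‖Complex.Gamma z‖ * ‖Complex.Gamma ((1:ℂ) - z)‖ * ‖Complex.sin ((Real.pi:ℂ) * z)‖ := by ring
        _ = Real.pi := hn
        _ ≤ _ := key
    exact le_of_mul_le_mul_right hfin hP


lemma gammaUpperOne :
    ∃ C : ℝ, 0 < C ∧ ∀ u : ℝ,
      ‖Complex.Gamma (1 + (u:ℂ)*I)‖ ≤ C * (1+|u|)^2 * Real.exp (-(Real.pi * |u|) / 2) := by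
  refine ⟨max (Real.exp (Real.pi/2)) (2*Real.sqrt Real.pi), lt_max_of_lt_left (Real.exp_pos _),
    fun u => ?_⟩
  set M := max (Real.exp (Real.pi/2)) (2*Real.sqrt Real.pi) with hM
  have hMpos : 0 < M := lt_max_of_lt_left (Real.exp_pos _)
  set E := Real.exp (-(Real.pi * |u|) / 2) with hE
  have hEpos : 0 < E := Real.exp_pos _
  have h1u : (1:ℝ) ≤ 1+|u| := by simp [abs_nonneg]
  have hsq : (1:ℝ) ≤ (1+|u|)^2 := by nlinarith
  rcases le_or_gt |u| 1 with hu | hu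
  · have hb : ‖Complex.Gamma (1 + (u:ℂ)*I)‖ ≤ Real.Gamma 1 := by
      have := norm_Gamma_le (s := 1 + (u:ℂ)*I) (by simp)
      simpa using this
    rw [Real.Gamma_one] at hb
    have hEe : Real.exp (-Real.pi/2) ≤ E := by
      rw [hE]; apply Real.exp_le_exp.2; have := Real.pi_pos; nlinarith
    have step : (1:ℝ) = Real.exp (Real.pi/2) * Real.exp (-Real.pi/2) := by
      rw [← Real.exp_add, show Real.pi/2 + -Real.pi/2 = 0 by ring, Real.exp_zero]
    calc ‖Complex.Gamma (1 + (u:ℂ)*I)‖ ≤ 1 := hb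
      _ = Real.exp (Real.pi/2) * Real.exp (-Real.pi/2) := step
      _ ≤ M * E := mul_le_mul (le_max_left _ _) hEe (Real.exp_pos _).le hMpos.le
      _ ≤ M * (1+|u|)^2 * E := by
          nlinarith [mul_le_mul_of_nonneg_left hsq hMpos.le, mul_pos hMpos hEpos]
  · have hu0 : u ≠ 0 := by intro h; rw [h] at hu; simp at hu; linarith
    have hne : (u:ℂ)*I ≠ 0 := by
      simp [Complex.ext_iff, hu0]
    have hrefl := Complex.Gamma_mul_Gamma_one_sub ((u:ℂ)*I)
    have key : Complex.Gamma (1 + (u:ℂ)*I) * Complex.Gamma (1 - (u:ℂ)*I) =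
        (u:ℂ)*I * (↑Real.pi / Complex.sin (↑Real.pi * ((u:ℂ)*I))) := by
      rw [show (1:ℂ) + (u:ℂ)*I = (u:ℂ)*I + 1 by ring, Complex.Gamma_add_one _ hne, mul_assoc,
        hrefl]
    have hsin : Complex.sin (↑Real.pi * ((u:ℂ)*I)) = ((Real.sinh (Real.pi*u) : ℝ):ℂ) * I := by
      rw [show (↑Real.pi * ((u:ℂ)*I)) = ((Real.pi*u : ℝ):ℂ)*I by push_cast; ring,
        Complex.sin_mul_I, Complex.ofReal_sinh]
    have hconj : ‖Complex.Gamma (1 - (u:ℂ)*I)‖ = ‖Complex.Gamma (1 + (u:ℂ)*I)‖ := by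
      rw [show (1:ℂ) - (u:ℂ)*I = (starRingEnd ℂ) (1 + (u:ℂ)*I) by
        apply Complex.ext <;> simp, Complex.Gamma_conj]
      simp [Complex.norm_conj]
    have hnorm := congrArg norm key
    rw [norm_mul, norm_mul, norm_div, hconj, hsin, norm_mul] at hnorm
    have e1 : ‖(u:ℂ)‖ = |u| := by simp
    have e2 : ‖I‖ = 1 := by simp
    have e3 : ‖((Real.sinh (Real.pi*u) : ℝ):ℂ)‖ = Real.sinh (Real.pi*|u|) := by
      simp only [Complex.norm_real, Real.norm_eq_abs]
      rw [Real.abs_sinh, abs_mul, abs_of_pos Real.pi_pos]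
    have e4 : ‖(Real.pi:ℂ)‖ = Real.pi := by
      simp [Complex.norm_real, abs_of_pos Real.pi_pos]
    rw [e1, e2] at hnorm
    rw [norm_mul, e3, e2, e4] at hnorm
    have hnorm2 : ‖Complex.Gamma (1 + (u:ℂ)*I)‖ * ‖Complex.Gamma (1 + (u:ℂ)*I)‖ =
        |u| * (Real.pi / Real.sinh (Real.pi*|u|)) := by
      rw [mul_one, mul_one] at hnorm; exact hnorm
    clear hnorm
    have hnorm := hnorm2
    have hsinhpos : 0 < Real.sinh (Real.pi*|u|) := by
      have : (1:ℝ) ≤ Real.pi * |u| := by nlinarith [Real.pi_gt_three]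
      nlinarith [sinh_ge this, Real.exp_pos (Real.pi*|u|)]
    have hsinh4 : Real.exp (Real.pi*|u|)/4 ≤ Real.sinh (Real.pi*|u|) := by
      apply sinh_ge; nlinarith [Real.pi_gt_three]
    have hEa : E * E * Real.exp (Real.pi*|u|) = 1 := by
      rw [hE, ← Real.exp_add, ← Real.exp_add,
        show -(Real.pi * |u|) / 2 + -(Real.pi * |u|) / 2 + Real.pi * |u| = 0 by ring,
        Real.exp_zero]
    set N := ‖Complex.Gamma (1 + (u:ℂ)*I)‖ with hN
    have hN2 : N * N ≤ 4*Real.pi*(1+|u|)^2*(E*E) := by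
      rw [hnorm]
      have h1 : |u| * (Real.pi / Real.sinh (Real.pi*|u|)) ≤
          |u| * (Real.pi / (Real.exp (Real.pi*|u|)/4)) := by
        apply mul_le_mul_of_nonneg_left _ (abs_nonneg u)
        exact div_le_div_of_nonneg_left Real.pi_pos.le (show (0:ℝ) < Real.exp (Real.pi*|u|)/4 by positivity) hsinh4
      refine h1.trans ?_
      have hexp : Real.pi / (Real.exp (Real.pi*|u|)/4) = 4*Real.pi*(E*E) := by
        rw [eq_comm, eq_div_iff (show Real.exp (Real.pi*|u|)/4 ≠ 0 by positivity)]
        linear_combination Real.pi * hEa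
      rw [hexp]
      nlinarith [abs_nonneg u, hEpos, Real.pi_pos, mul_pos hEpos hEpos]
    have hMge : 2*Real.sqrt Real.pi ≤ M := le_max_right _ _
    have hb2 : (2*Real.sqrt Real.pi*(1+|u|)*E)^2 = 4*Real.pi*(1+|u|)^2*(E*E) := by
      have hππ : (Real.sqrt Real.pi)^2 = Real.pi := Real.sq_sqrt Real.pi_pos.le
      calc (2*Real.sqrt Real.pi*(1+|u|)*E)^2
          = (Real.sqrt Real.pi)^2 * (4*(1+|u|)^2*(E*E)) := by ring
        _ = 4*Real.pi*(1+|u|)^2*(E*E) := by rw [hππ]; ring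
    have hbpos : 0 < 2*Real.sqrt Real.pi*(1+|u|)*E := by positivity
    have hNsq : N^2 ≤ (2*Real.sqrt Real.pi*(1+|u|)*E)^2 := by
      rw [sq, hb2]; exact hN2
    have hNb : N ≤ 2*Real.sqrt Real.pi*(1+|u|)*E := by
      have := Real.sqrt_le_sqrt hNsq
      rwa [Real.sqrt_sq (norm_nonneg _), Real.sqrt_sq hbpos.le] at this
    have h1sq : (1+|u|) ≤ (1+|u|)^2 := by nlinarith
    calc N ≤ 2*Real.sqrt Real.pi*(1+|u|)*E := hNb
      _ = (2*Real.sqrt Real.pi)*(1+|u|)*E := by ring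
      _ ≤ (M*(1+|u|)^2)*E := by
          refine mul_le_mul_of_nonneg_right ?_ hEpos.le
          exact mul_le_mul hMge h1sq (by positivity) hMpos.le

lemma gammaUpperNat (n : ℕ) : ∀ σ : ℝ, 0 < σ → σ ≤ n →
    ∃ C : ℝ, 0 < C ∧ ∃ k : ℕ, ∀ u : ℝ,
      ‖Complex.Gamma (σ + u*I)‖ ≤ C * (1+|u|)^k * Real.exp (-(Real.pi * |u|) / 2) := by
  induction n with
  | zero =>
    intro σ hσ hσ0
    exfalso; simp at hσ0; linarith
  | succ n ih =>
    intro σ hσ hσn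
    by_cases hle : σ ≤ n
    · exact ih σ hσ hle
    · push_neg at hle
      rcases Nat.eq_zero_or_pos n with hn0 | hn1
      · subst hn0
        have hσ1 : σ ≤ 1 := by simpa using hσn
        rcases lt_or_eq_of_le hσ1 with h | h
        · obtain ⟨C, hC, hb⟩ := gammaUpperBase hσ h
          exact ⟨C, hC, 2, hb⟩
        · subst h
          obtain ⟨C, hC, hb⟩ := gammaUpperOne
          refine ⟨C, hC, 2, fun u => ?_⟩
          have : ((1:ℝ):ℂ) + (u:ℂ)*I = 1 + (u:ℂ)*I := by norm_num
          rw [this]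
          exact hb u
      · have hσg1 : 1 < σ := by
          have h1n : (1:ℝ) ≤ n := by exact_mod_cast hn1
          linarith
        obtain ⟨C, hC, k, hk⟩ := ih (σ-1) (by linarith) (by
          push_cast at hσn ⊢; linarith)
        refine ⟨C * max (σ-1) 1, by positivity, k+1, fun u => ?_⟩
        have hid : ((σ:ℝ):ℂ) + u*I = (((σ-1:ℝ):ℂ) + u*I) + 1 := by push_cast; ring
        have hne : ((σ-1:ℝ):ℂ) + u*I ≠ 0 := by
          intro h
          have := congrArg Complex.re h
          simp at this; linarith
        rw [hid, Complex.Gamma_add_one _ hne, norm_mul]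
        have hz : ‖((σ-1:ℝ):ℂ) + u*I‖ ≤ max (σ-1) 1 * (1+|u|) := by
          refine (norm_add_le _ _).trans ?_
          have e1 : ‖((σ-1:ℝ):ℂ)‖ = σ-1 := by
            rw [Complex.norm_real, Real.norm_eq_abs]
            exact abs_of_pos (by linarith)
          have e2 : ‖(u:ℂ)*I‖ = |u| := by simp
          rw [e1, e2]
          have hs1 : σ-1 ≤ max (σ-1) 1 := le_max_left _ _
          have hs2 : (1:ℝ) ≤ max (σ-1) 1 := le_max_right _ _
          nlinarith [abs_nonneg u]
        calc ‖((σ-1:ℝ):ℂ) + u*I‖ * ‖Complex.Gamma (((σ-1:ℝ):ℂ) + u*I)‖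
            ≤ (max (σ-1) 1 * (1+|u|)) * (C * (1+|u|)^k * Real.exp (-(Real.pi * |u|) / 2)) := by
              refine mul_le_mul hz (hk u) (norm_nonneg _) (by positivity)
          _ = C * max (σ-1) 1 * (1+|u|)^(k+1) * Real.exp (-(Real.pi * |u|) / 2) := by
              rw [pow_succ]; ring

lemma gammaUpper {σ : ℝ} (hσ : 0 < σ) :
    ∃ C : ℝ, 0 < C ∧ ∃ k : ℕ, ∀ u : ℝ,
      ‖Complex.Gamma (σ + u*I)‖ ≤ C * (1+|u|)^k * Real.exp (-(Real.pi * |u|) / 2) :=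
  gammaUpperNat ⌈σ⌉₊ σ hσ (Nat.le_ceil σ)

lemma norm_Gamma_two_mul (z : ℂ) :
    ‖Complex.Gamma z‖ * ‖Complex.Gamma (z+1/2)‖ =
      ‖Complex.Gamma (2*z)‖ * ((2:ℝ)^(1-2*z.re) * Real.sqrt Real.pi) := by
  have h := Complex.Gamma_mul_Gamma_add_half z
  have hn := congrArg norm h
  rw [norm_mul, norm_mul, norm_mul] at hn
  have e1 : ‖((2:ℂ))^((1:ℂ)-2*z)‖ = (2:ℝ)^(1-2*z.re) := by
    rw [show ((2:ℂ)) = (((2:ℝ)):ℂ) by norm_num,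
      Complex.norm_cpow_eq_rpow_re_of_pos two_pos]
    congr 1
    simp
  have e2 : ‖((Real.sqrt Real.pi : ℝ):ℂ)‖ = Real.sqrt Real.pi := by
    rw [Complex.norm_real, Real.norm_eq_abs]
    exact abs_of_nonneg (Real.sqrt_nonneg _)
  rw [e1, e2] at hn
  rw [hn]
  ring

lemma poly_le_exp (k : ℕ) (x : ℝ) (hx : 0 ≤ x) :
    (1+x)^k ≤ (k+1:ℝ)^k * Real.exp x := by
  have hk1 : (0:ℝ) < k+1 := by positivity
  have h1 : 1+x ≤ (k+1:ℝ) * Real.exp (x/(k+1)) := by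
    have h2 := mul_le_mul_of_nonneg_left (Real.add_one_le_exp (x/(k+1))) hk1.le
    have h3 : (k+1:ℝ) * (x/(k+1) + 1) = x + (k+1) := by field_simp
    nlinarith [Nat.cast_nonneg (α := ℝ) k]
  have hfrac : (k:ℝ)*(x/(k+1)) ≤ x := by
    rw [show (k:ℝ)*(x/(k+1)) = k*x/(k+1) by ring, div_le_iff₀ hk1]
    nlinarith
  calc (1+x)^k ≤ ((k+1:ℝ) * Real.exp (x/(k+1)))^k :=
        pow_le_pow_left₀ (by linarith) h1 k
    _ = (k+1:ℝ)^k * Real.exp (x/(k+1))^k := by rw [mul_pow]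
    _ = (k+1:ℝ)^k * Real.exp (k*(x/(k+1))) := by rw [Real.exp_nat_mul]
    _ ≤ (k+1:ℝ)^k * Real.exp x :=
        mul_le_mul_of_nonneg_left (Real.exp_le_exp.2 hfrac) (by positivity)

lemma integrable_exp_neg_abs : Integrable (fun t : ℝ => Real.exp (-|t|)) := by
  have h1 : IntegrableOn (fun t : ℝ => Real.exp (-|t|)) (Ioi 0) := by
    refine (exp_neg_integrableOn_Ioi 0 one_pos).congr_fun (fun x hx => ?_) measurableSet_Ioi
    rw [abs_of_pos hx]
    norm_num
  have h2 : IntegrableOn (fun t : ℝ => Real.exp (-|t|)) (Iic 0) := by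
    refine (integrableOn_exp_Iic 0).congr_fun (fun x hx => ?_) measurableSet_Iic
    rw [abs_of_nonpos hx, neg_neg]
  have := h2.union h1
  rw [Iic_union_Ioi, integrableOn_univ] at this
  exact this

lemma integrable_poly_exp (k : ℕ) :
    Integrable (fun t : ℝ => (1+|t|)^k *
      (Real.exp (-(Real.pi*|t|)/2) * Real.exp (-(Real.pi*|t|)/2))) := by
  refine Integrable.mono' (g := fun t => (k+1:ℝ)^k * Real.exp (-|t|))
    (integrable_exp_neg_abs.const_mul _) ?_ ?_
  · apply Continuous.aestronglyMeasurable
    continuity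
  · filter_upwards with t
    have hE : Real.exp (-(Real.pi*|t|)/2) * Real.exp (-(Real.pi*|t|)/2) =
        Real.exp (-(Real.pi*|t|)) := by
      rw [← Real.exp_add]; ring_nf
    rw [Real.norm_eq_abs, _root_.abs_of_nonneg (by positivity), hE]
    have h1 : (1+|t|)^k ≤ (k+1:ℝ)^k * Real.exp |t| := poly_le_exp k |t| (abs_nonneg t)
    have h2 : Real.exp |t| * Real.exp (-(Real.pi*|t|)) ≤ Real.exp (-|t|) := by
      rw [← Real.exp_add]
      apply Real.exp_le_exp.2
      nlinarith [Real.pi_gt_three, abs_nonneg t]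
    calc (1+|t|)^k * Real.exp (-(Real.pi*|t|))
        ≤ ((k+1:ℝ)^k * Real.exp |t|) * Real.exp (-(Real.pi*|t|)) :=
          mul_le_mul_of_nonneg_right h1 (Real.exp_pos _).le
      _ = (k+1:ℝ)^k * (Real.exp |t| * Real.exp (-(Real.pi*|t|))) := by ring
      _ ≤ (k+1:ℝ)^k * Real.exp (-|t|) :=
          mul_le_mul_of_nonneg_left h2 (by positivity)

lemma G_bound (μ : ℂ) (ν : ℝ) (hμν : μ.re < ν) (hν : ν < 1/2) :
    ∃ C : ℝ, 0 < C ∧ ∃ k : ℕ, ∀ t : ℝ,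
      ‖Complex.Gamma (3/2 - ((ν:ℂ)+t*I)) * Complex.Gamma (1/2 - ((ν:ℂ)+t*I)) *
        Complex.Gamma (((ν:ℂ)+t*I) - μ) / Complex.Gamma (1 - ((ν:ℂ)+t*I) - μ)‖ ≤
      C * (1+|t|)^k *
        (Real.exp (-(Real.pi*|t|)/2) * Real.exp (-(Real.pi*|t|)/2)) := by
  obtain ⟨C₁, hC₁, k₁, h₁⟩ := gammaUpper (σ := 3/2-ν) (by linarith)
  obtain ⟨C₂, hC₂, k₂, h₂⟩ := gammaUpper (σ := 1/2-ν) (by linarith)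
  obtain ⟨C₃, hC₃, k₃, h₃⟩ := gammaUpper (σ := ν-μ.re) (by linarith)
  obtain ⟨c₄, hc₄, h₄⟩ := gammaLower (σ := 1-ν-μ.re) (by linarith)
  set m := |μ.im| with hm
  have hm0 : 0 ≤ m := abs_nonneg _
  set q := Real.exp (Real.pi*m/2) with hq
  have hq0 : 0 < q := Real.exp_pos _
  refine ⟨C₁*C₂*C₃*(1+m)^(k₃+1)*(q*q)/c₄, by positivity, k₁+k₂+k₃+1, fun t => ?_⟩
  set P := 1+|t| with hP
  have hP0 : (0:ℝ) < P := by positivity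
  set E := Real.exp (-(Real.pi*|t|)/2) with hE
  have hE0 : 0 < E := Real.exp_pos _
  -- rewrite the four arguments
  have hA : (3:ℂ)/2 - ((ν:ℂ)+t*I) = ((3/2-ν : ℝ):ℂ) + ((-t : ℝ):ℂ)*I := by push_cast; ring
  have hB : (1:ℂ)/2 - ((ν:ℂ)+t*I) = ((1/2-ν : ℝ):ℂ) + ((-t : ℝ):ℂ)*I := by push_cast; ring
  have hμeq : μ = (μ.re:ℂ) + (μ.im:ℂ)*I := (Complex.re_add_im μ).symm
  have hC : ((ν:ℂ)+t*I) - μ = ((ν-μ.re : ℝ):ℂ) + ((t-μ.im : ℝ):ℂ)*I := by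
    apply Complex.ext <;> simp <;> ring
  have hD : 1 - ((ν:ℂ)+t*I) - μ = ((1-ν-μ.re : ℝ):ℂ) + ((-(t+μ.im) : ℝ):ℂ)*I := by
    apply Complex.ext <;> simp <;> ring
  have hA' : ‖Complex.Gamma ((3:ℂ)/2 - ((ν:ℂ)+t*I))‖ ≤ C₁ * P^k₁ * E := by
    rw [hA]
    have := h₁ (-t)
    rwa [abs_neg] at this
  have hB' : ‖Complex.Gamma ((1:ℂ)/2 - ((ν:ℂ)+t*I))‖ ≤ C₂ * P^k₂ * E := by
    rw [hB]
    have := h₂ (-t)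
    rwa [abs_neg] at this
  have habs3 : |t - μ.im| ≤ |t| + m := by
    rw [sub_eq_add_neg]
    exact (abs_add_le _ _).trans (by rw [abs_neg])
  have habs3' : |t| - m ≤ |t - μ.im| := by
    have := abs_sub_abs_le_abs_sub t μ.im
    linarith
  have habs4 : |t + μ.im| ≤ |t| + m := abs_add_le _ _
  have hbase3 : 1 + |t - μ.im| ≤ (1+m)*P := by rw [hP]; nlinarith [abs_nonneg t]
  have hbase4 : 1 + |t + μ.im| ≤ (1+m)*P := by rw [hP]; nlinarith [abs_nonneg t]
  have hexp3 : Real.exp (-(Real.pi * |t - μ.im|)/2) ≤ q * E := by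
    rw [hq, hE, ← Real.exp_add]
    apply Real.exp_le_exp.2
    nlinarith [Real.pi_pos]
  have hexp4 : E / q ≤ Real.exp (-(Real.pi * |t + μ.im|)/2) := by
    rw [hq, hE, div_eq_mul_inv, ← Real.exp_neg, ← Real.exp_add]
    apply Real.exp_le_exp.2
    nlinarith [Real.pi_pos]
  have hC' : ‖Complex.Gamma (((ν:ℂ)+t*I) - μ)‖ ≤ C₃ * ((1+m)*P)^k₃ * (q*E) := by
    rw [hC]
    refine (h₃ (t - μ.im)).trans ?_
    refine mul_le_mul (mul_le_mul (le_refl C₃)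
      (pow_le_pow_left₀ (by positivity) hbase3 k₃) (by positivity) hC₃.le)
      hexp3 (Real.exp_pos _).le (by positivity)
  have hD' : c₄ * (E/q) / ((1+m)*P) ≤ ‖Complex.Gamma (1 - ((ν:ℂ)+t*I) - μ)‖ := by
    rw [hD]
    refine le_trans ?_ (h₄ (-(t+μ.im)))
    rw [abs_neg]
    refine div_le_div₀ (by positivity) ?_ (by positivity) hbase4
    exact mul_le_mul_of_nonneg_left hexp4 hc₄.le
  -- combine
  rw [norm_div, norm_mul, norm_mul]
  have hnum : ‖Complex.Gamma ((3:ℂ)/2 - ((ν:ℂ)+t*I))‖ *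
      ‖Complex.Gamma ((1:ℂ)/2 - ((ν:ℂ)+t*I))‖ * ‖Complex.Gamma (((ν:ℂ)+t*I) - μ)‖ ≤
      (C₁ * P^k₁ * E) * (C₂ * P^k₂ * E) * (C₃ * ((1+m)*P)^k₃ * (q*E)) := by
    refine mul_le_mul (mul_le_mul hA' hB' (norm_nonneg _) (by positivity))
      hC' (norm_nonneg _) (by positivity)
  have hL0 : 0 < c₄ * (E/q) / ((1+m)*P) := by positivity
  refine le_trans (div_le_div₀ (by positivity) hnum hL0 hD') (le_of_eq ?_)
  rw [mul_pow]
  field_simp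
  ring

lemma contGamma {f : ℝ → ℂ} (hf : Continuous f) (h : ∀ t, 0 < (f t).re) :
    Continuous fun t => Complex.Gamma (f t) := by
  rw [continuous_iff_continuousAt]
  intro t
  refine (Complex.differentiableAt_Gamma _ (fun m => ?_)).continuousAt.comp hf.continuousAt
  intro hc
  have := congrArg Complex.re hc
  simp only [Complex.neg_re, Complex.natCast_re] at this
  have hm : (0:ℝ) ≤ m := Nat.cast_nonneg m
  nlinarith [h t]

lemma rpow_le_max {a b x : ℝ} (ha : 0 < a) (hax : a ≤ x) (hxb : x ≤ b) (c : ℝ) :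
    x ^ c ≤ max (a ^ c) (b ^ c) := by
  rcases le_or_gt 0 c with hc | hc
  · exact le_max_of_le_right (Real.rpow_le_rpow (by linarith) hxb hc)
  · refine le_max_of_le_left ?_
    have hx : 0 < x := lt_of_lt_of_le ha hax
    rw [show c = -(-c) by ring, Real.rpow_neg ha.le, Real.rpow_neg hx.le]
    exact inv_anti₀ (Real.rpow_pos_of_pos ha _) (Real.rpow_le_rpow ha.le hax (by linarith))

/-- The integrand of the Mellin–Barnes representation (1.4). -/
noncomputable def mbIntegrand (μ : ℂ) (τ : ℝ) (s : ℂ) : ℂ :=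
  Complex.Gamma (1 - s + τ * Complex.I) * Complex.Gamma (1 - s - τ * Complex.I) *
    Complex.Gamma (1/2 - s) * Complex.Gamma (s - μ) /
    (Complex.Gamma (1 - s) * Complex.Gamma (1 - s - μ))

/-- The kernel Φ(x,τ) = √(π/(1+x)) Γ(1+iτ-μ)Γ(1-iτ-μ) P^μ_{iτ}(√(1+x)) P^μ_{-iτ}(√(1+x)),
expressed via its Mellin–Barnes representation
Φ(x,τ) = (1/(2πi)) ∫_{ν-i∞}^{ν+i∞} mbIntegrand(s) x^{-s} ds (contour Re s = ν). -/
noncomputable def PhiMB (μ : ℂ) (ν : ℝ) (x τ : ℝ) : ℂ :=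
  (1/(2*Real.pi)) * ∫ t : ℝ,
    mbIntegrand μ τ ((ν:ℂ) + t * Complex.I) * (x:ℂ) ^ (-((ν:ℂ) + t * Complex.I))

/-- The index transform (1.1), (Ff)(τ) = ∫₀^∞ Φ(x,τ) f(x) dx. -/
noncomputable def indexF (μ : ℂ) (ν : ℝ) (f : ℝ → ℂ) (τ : ℝ) : ℂ :=
  ∫ x in Set.Ioi (0:ℝ), PhiMB μ ν x τ * f x

lemma mb_le (μ : ℂ) (ν : ℝ) (hμν : μ.re < ν) (hν : ν < 1/2) (τ t : ℝ) :
    ‖mbIntegrand μ τ ((ν:ℂ) + t*I)‖ ≤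
      ((2:ℝ)^(1-2*ν) / Real.sqrt Real.pi) *
        (Real.Gamma (1-ν) * Real.Gamma (1-ν) / Real.Gamma ((1-ν)+(1-ν))) *
        ‖Complex.Gamma (3/2 - ((ν:ℂ)+t*I)) * Complex.Gamma (1/2 - ((ν:ℂ)+t*I)) *
          Complex.Gamma (((ν:ℂ)+t*I) - μ) / Complex.Gamma (1 - ((ν:ℂ)+t*I) - μ)‖ := by
  set s : ℂ := (ν:ℂ) + t*I with hs
  have hsre : s.re = ν := by simp [hs]
  have hre1 : ((1:ℂ) - s + τ*I).re = 1-ν := by simp [hs]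
  have hre2 : ((1:ℂ) - s - τ*I).re = 1-ν := by simp [hs]
  have h1 := norm_Gamma_mul_le (u := 1-s+τ*I) (v := 1-s-τ*I)
    (by rw [hre1]; linarith) (by rw [hre2]; linarith)
  rw [hre1, hre2] at h1
  have hsum : ((1:ℂ)-s+τ*I) + ((1:ℂ)-s-τ*I) = 2*(1-s) := by ring
  rw [hsum] at h1
  have h2 := norm_Gamma_two_mul (1-s)
  have hre3 : ((1:ℂ)-s).re = 1-ν := by simp [hs]
  rw [hre3] at h2
  have h32 : (1:ℂ)-s+1/2 = 3/2 - s := by ring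
  rw [h32] at h2
  -- abbreviations
  set a := ‖Complex.Gamma ((1:ℂ)-s+τ*I)‖
  set b := ‖Complex.Gamma ((1:ℂ)-s-τ*I)‖
  set g1 := ‖Complex.Gamma ((3:ℂ)/2-s)‖
  set g2 := ‖Complex.Gamma ((1:ℂ)/2-s)‖
  set g3 := ‖Complex.Gamma (s-μ)‖
  set d1 := ‖Complex.Gamma ((1:ℂ)-s)‖
  set d2 := ‖Complex.Gamma ((1:ℂ)-s-μ)‖
  set T := ‖Complex.Gamma (2*((1:ℂ)-s))‖
  set R := Real.Gamma (1-ν) * Real.Gamma (1-ν) / Real.Gamma ((1-ν)+(1-ν)) with hR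
  have hd1 : 0 < d1 := by
    apply norm_pos_iff.mpr
    exact Complex.Gamma_ne_zero_of_re_pos (by rw [hre3]; linarith)
  have hd2 : 0 < d2 := by
    apply norm_pos_iff.mpr
    refine Complex.Gamma_ne_zero_of_re_pos ?_
    have : ((1:ℂ)-s-μ).re = 1-ν-μ.re := by simp [hs]
    rw [this]; linarith
  have hq : (0:ℝ) < (2:ℝ)^(2*ν-1) := Real.rpow_pos_of_pos two_pos _
  have hp : (2:ℝ)^(1-2*ν) = ((2:ℝ)^(2*ν-1))⁻¹ := by
    rw [← Real.rpow_neg two_pos.le]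
    norm_num
  have h2' : T = d1*g1/((2:ℝ)^(2*ν-1)*Real.sqrt Real.pi) := by
    rw [eq_div_iff (by positivity)]
    rw [show (1:ℝ)-2*(1-ν) = 2*ν-1 by ring] at h2
    linarith [h2]
  have hmb : ‖mbIntegrand μ τ s‖ = a*b*g2*g3/(d1*d2) := by
    rw [mbIntegrand, norm_div, norm_mul, norm_mul, norm_mul, norm_mul]
  have hG : ‖Complex.Gamma (3/2 - s) * Complex.Gamma (1/2 - s) *
      Complex.Gamma (s - μ) / Complex.Gamma (1 - s - μ)‖ = g1*g2*g3/d2 := by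
    rw [norm_div, norm_mul, norm_mul]
  rw [hmb, hG]
  have step1 : a*b*g2*g3/(d1*d2) ≤ (T*R)*g2*g3/(d1*d2) := by
    gcongr
  refine step1.trans (le_of_eq ?_)
  rw [h2', hp]
  have hsπ : Real.sqrt Real.pi ≠ 0 := (Real.sqrt_pos.2 Real.pi_pos).ne'
  field_simp

/-- for Re μ < 1/2, ν ∈ (Re μ, 1/2) and f with ∫₀^∞ |f(x)| x^{-ν} dx < ∞,
the index transform Ff is well defined (the defining integral converges absolutely for
each τ > 0) and sup_{τ>0} |(Ff)(τ)| ≤ C_{μ,ν} ‖f‖_{1-ν,1}, where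
C_{μ,ν} = (2^{-2ν}/(π√π)) B(1-ν,1-ν) ∫_{ν-i∞}^{ν+i∞} |Γ(3/2-s)Γ(1/2-s)Γ(s-μ)/Γ(1-s-μ)| |ds|
and ‖f‖_{1-ν,1} = ∫₀^∞ |f(x)| x^{-ν} dx. -/
theorem indexF_bounded (μ : ℂ) (hμ : μ.re < 1/2) (ν : ℝ) (hν : ν ∈ Set.Ioo μ.re (1/2 : ℝ))
    (f : ℝ → ℂ) (hfm : AEStronglyMeasurable f (volume.restrict (Set.Ioi 0)))
    (hf : IntegrableOn (fun x : ℝ => ‖f x‖ * x ^ (-ν)) (Set.Ioi 0)) :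
    (∀ τ > (0:ℝ), IntegrableOn (fun x : ℝ => PhiMB μ ν x τ * f x) (Set.Ioi 0)) ∧
    ∀ τ > (0:ℝ), ‖indexF μ ν f τ‖ ≤
      ((2:ℝ) ^ (-(2*ν)) / (Real.pi * Real.sqrt Real.pi)) *
        (Real.Gamma (1-ν) * Real.Gamma (1-ν) / Real.Gamma ((1-ν) + (1-ν))) *
        (∫ t : ℝ, ‖Complex.Gamma (3/2 - ((ν:ℂ) + t * Complex.I)) *
            Complex.Gamma (1/2 - ((ν:ℂ) + t * Complex.I)) *
            Complex.Gamma (((ν:ℂ) + t * Complex.I) - μ) /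
            Complex.Gamma (1 - ((ν:ℂ) + t * Complex.I) - μ)‖) *
        (∫ x in Set.Ioi (0:ℝ), ‖f x‖ * x ^ (-ν)) := by
  obtain ⟨hμν, hν2⟩ := hν
  -- the G function and its properties
  set Gn : ℝ → ℝ := fun t => ‖Complex.Gamma (3/2 - ((ν:ℂ) + t * Complex.I)) *
      Complex.Gamma (1/2 - ((ν:ℂ) + t * Complex.I)) *
      Complex.Gamma (((ν:ℂ) + t * Complex.I) - μ) /
      Complex.Gamma (1 - ((ν:ℂ) + t * Complex.I) - μ)‖ with hGn
  have hscont : Continuous fun t : ℝ => (ν:ℂ) + t * Complex.I :=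
    continuous_const.add (Complex.continuous_ofReal.mul continuous_const)
  have hcont1 : Continuous fun t : ℝ => Complex.Gamma (3/2 - ((ν:ℂ) + t * Complex.I)) :=
    contGamma (continuous_const.sub hscont) (fun t => by simp; linarith)
  have hcont2 : Continuous fun t : ℝ => Complex.Gamma (1/2 - ((ν:ℂ) + t * Complex.I)) :=
    contGamma (continuous_const.sub hscont) (fun t => by simp; linarith)
  have hcont3 : Continuous fun t : ℝ => Complex.Gamma (((ν:ℂ) + t * Complex.I) - μ) :=
    contGamma (hscont.sub continuous_const) (fun t => by simp; linarith)
  have hcont4 : Continuous fun t : ℝ => Complex.Gamma (1 - ((ν:ℂ) + t * Complex.I) - μ) :=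
    contGamma ((continuous_const.sub hscont).sub continuous_const) (fun t => by simp; linarith)
  have hne4 : ∀ t : ℝ, Complex.Gamma (1 - ((ν:ℂ) + t * Complex.I) - μ) ≠ 0 := fun t =>
    Complex.Gamma_ne_zero_of_re_pos (by simp; linarith)
  have hGncont : Continuous Gn := by
    rw [hGn]
    exact (((hcont1.mul hcont2).mul hcont3).div hcont4 hne4).norm
  obtain ⟨CG, hCG, kG, hG⟩ := G_bound μ ν hμν hν2
  have hGint : Integrable Gn := by
    refine Integrable.mono' ((integrable_poly_exp kG).const_mul CG)
      hGncont.aestronglyMeasurable ?_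
    filter_upwards with t
    rw [Real.norm_eq_abs, _root_.abs_of_nonneg (norm_nonneg _)]
    calc Gn t ≤ CG * (1+|t|)^kG *
        (Real.exp (-(Real.pi*|t|)/2) * Real.exp (-(Real.pi*|t|)/2)) := hG t
      _ = CG * ((1+|t|)^kG *
        (Real.exp (-(Real.pi*|t|)/2) * Real.exp (-(Real.pi*|t|)/2))) := by ring
  set M := ∫ t : ℝ, Gn t with hM
  have hM0 : 0 ≤ M := integral_nonneg (fun t => norm_nonneg _)
  set R := Real.Gamma (1-ν) * Real.Gamma (1-ν) / Real.Gamma ((1-ν)+(1-ν)) with hR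
  have hR0 : 0 < R := by
    rw [hR]
    have h1 : (0:ℝ) < 1-ν := by linarith
    exact div_pos (mul_pos (Real.Gamma_pos_of_pos h1) (Real.Gamma_pos_of_pos h1))
      (Real.Gamma_pos_of_pos (by linarith))
  set K := ((2:ℝ)^(1-2*ν) / Real.sqrt Real.pi) * R with hK
  have hK0 : 0 < K := by
    rw [hK]
    exact mul_pos (div_pos (Real.rpow_pos_of_pos two_pos _) (Real.sqrt_pos.2 Real.pi_pos)) hR0
  -- continuity of mbIntegrand in t, for any τ
  have hmbcont : ∀ τ : ℝ, Continuous fun t : ℝ => mbIntegrand μ τ ((ν:ℂ) + t * Complex.I) := by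
    intro τ
    have c1 : Continuous fun t : ℝ =>
        Complex.Gamma (1 - ((ν:ℂ) + t * Complex.I) + τ * Complex.I) :=
      contGamma ((continuous_const.sub hscont).add continuous_const) (fun t => by simp; linarith)
    have c2 : Continuous fun t : ℝ =>
        Complex.Gamma (1 - ((ν:ℂ) + t * Complex.I) - τ * Complex.I) :=
      contGamma ((continuous_const.sub hscont).sub continuous_const) (fun t => by simp; linarith)
    have c5 : Continuous fun t : ℝ => Complex.Gamma (1 - ((ν:ℂ) + t * Complex.I)) :=
      contGamma (continuous_const.sub hscont) (fun t => by simp; linarith)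
    have hne : ∀ t : ℝ, Complex.Gamma (1 - ((ν:ℂ) + t * Complex.I)) *
        Complex.Gamma (1 - ((ν:ℂ) + t * Complex.I) - μ) ≠ 0 := fun t =>
      mul_ne_zero (Complex.Gamma_ne_zero_of_re_pos (by simp; linarith)) (hne4 t)
    simp only [mbIntegrand]
    apply Continuous.div
    · exact ((c1.mul c2).mul hcont2).mul hcont3
    · exact c5.mul hcont4
    · exact hne
  -- pointwise bound for PhiMB
  have hΦ : ∀ τ : ℝ, ∀ x : ℝ, 0 < x →
      ‖PhiMB μ ν x τ‖ ≤ (1/(2*Real.pi)) * (K * M) * x^(-ν) := by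
    intro τ x hx
    rw [PhiMB]
    rw [norm_mul]
    have hcoef : ‖(1/(2*(Real.pi:ℂ)))‖ = 1/(2*Real.pi) := by
      simp [_root_.abs_of_pos Real.pi_pos]
    rw [hcoef]
    have hmb_le : ∀ t : ℝ, ‖mbIntegrand μ τ ((ν:ℂ) + t * Complex.I)‖ ≤ K * Gn t := by
      intro t
      have h := mb_le μ ν hμν hν2 τ t
      rw [hK, hR, hGn]
      exact h
    have hIb : ‖∫ t : ℝ, mbIntegrand μ τ ((ν:ℂ) + t * Complex.I) *
        (x:ℂ) ^ (-((ν:ℂ) + t * Complex.I))‖ ≤ K * M * x^(-ν) := by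
      refine (norm_integral_le_integral_norm _).trans ?_
      have hptw : ∀ t : ℝ, ‖mbIntegrand μ τ ((ν:ℂ) + t * Complex.I) *
          (x:ℂ) ^ (-((ν:ℂ) + t * Complex.I))‖ ≤ (K * x^(-ν)) * Gn t := by
        intro t
        rw [norm_mul]
        have hxnorm : ‖(x:ℂ) ^ (-((ν:ℂ) + t * Complex.I))‖ = x^(-ν) := by
          rw [Complex.norm_cpow_eq_rpow_re_of_pos hx]
          congr 1
          simp
        rw [hxnorm]
        calc ‖mbIntegrand μ τ ((ν:ℂ) + t * Complex.I)‖ * x^(-ν)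
            ≤ (K * Gn t) * x^(-ν) :=
              mul_le_mul_of_nonneg_right (hmb_le t) (Real.rpow_nonneg hx.le _)
          _ = (K * x^(-ν)) * Gn t := by ring
      calc ∫ t : ℝ, ‖mbIntegrand μ τ ((ν:ℂ) + t * Complex.I) *
            (x:ℂ) ^ (-((ν:ℂ) + t * Complex.I))‖
          ≤ ∫ t : ℝ, (K * x^(-ν)) * Gn t := by
            refine integral_mono_of_nonneg (Filter.Eventually.of_forall fun t => norm_nonneg _)
              (hGint.const_mul _) (Filter.Eventually.of_forall hptw)
        _ = (K * x^(-ν)) * M := by rw [integral_const_mul]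
        _ = K * M * x^(-ν) := by ring
    calc (1/(2*Real.pi)) * ‖∫ t : ℝ, mbIntegrand μ τ ((ν:ℂ) + t * Complex.I) *
          (x:ℂ) ^ (-((ν:ℂ) + t * Complex.I))‖
        ≤ (1/(2*Real.pi)) * (K * M * x^(-ν)) :=
          mul_le_mul_of_nonneg_left hIb (by positivity)
      _ = (1/(2*Real.pi)) * (K * M) * x^(-ν) := by ring
  -- measurability of PhiMB in x
  have hΦmeas : ∀ τ : ℝ, AEStronglyMeasurable (fun x => PhiMB μ ν x τ)
      (volume.restrict (Set.Ioi 0)) := by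
    intro τ
    refine ContinuousOn.aestronglyMeasurable (fun x₀ hx₀ => ContinuousAt.continuousWithinAt ?_)
      measurableSet_Ioi
    rw [mem_Ioi] at hx₀
    have hnb : Ioo (x₀/2) (2*x₀) ∈ nhds x₀ := Ioo_mem_nhds (by linarith) (by linarith)
    simp only [PhiMB]
    refine ContinuousAt.mul continuousAt_const ?_
    set mx := max ((x₀/2)^(-ν)) ((2*x₀)^(-ν)) with hmx
    have hmx0 : 0 ≤ mx := le_max_of_le_left (Real.rpow_nonneg (by linarith) _)
    refine continuousAt_of_dominated (bound := fun t => (K * mx) * Gn t) ?_ ?_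
      (hGint.const_mul _) ?_
    · refine Filter.eventually_of_mem hnb (fun x hx => ?_)
      have hx0 : (x:ℂ) ≠ 0 := by
        simp only [ne_eq, Complex.ofReal_eq_zero]
        intro h; rw [h] at hx; exact absurd hx.1 (by linarith)
      have hcp : (fun t : ℝ => (x:ℂ) ^ (-((ν:ℂ) + t * Complex.I))) =
          fun t : ℝ => Complex.exp (Complex.log x * (-((ν:ℂ) + t * Complex.I))) := by
        funext t
        exact Complex.cpow_def_of_ne_zero hx0 _
      refine Continuous.aestronglyMeasurable ?_
      refine (hmbcont τ).mul ?_
      rw [hcp]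
      exact (continuous_const.mul hscont.neg).cexp
    · refine Filter.eventually_of_mem hnb (fun x hx => Filter.Eventually.of_forall fun t => ?_)
      have hxpos : 0 < x := lt_trans (by linarith) hx.1
      rw [norm_mul]
      have hxnorm : ‖(x:ℂ) ^ (-((ν:ℂ) + t * Complex.I))‖ = x^(-ν) := by
        rw [Complex.norm_cpow_eq_rpow_re_of_pos hxpos]
        congr 1
        simp
      rw [hxnorm]
      have hrp : x^(-ν) ≤ mx := rpow_le_max (by linarith) hx.1.le hx.2.le (-ν)
      show ‖mbIntegrand μ τ ((ν:ℂ) + t * Complex.I)‖ * x ^ (-ν) ≤ K * mx * Gn t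
      calc ‖mbIntegrand μ τ ((ν:ℂ) + t * Complex.I)‖ * x^(-ν)
          ≤ (K * Gn t) * mx := by
            refine mul_le_mul ?_ hrp (Real.rpow_nonneg hxpos.le _) (by positivity)
            · rw [hK, hR, hGn]; exact mb_le μ ν hμν hν2 τ t
        _ = (K * mx) * Gn t := by ring
    · refine Filter.Eventually.of_forall fun t => ?_
      refine ContinuousAt.mul continuousAt_const ?_
      have hslit : ((x₀:ℝ):ℂ) ∈ Complex.slitPlane := by
        rw [Complex.mem_slitPlane_iff]
        left
        simpa using hx₀
      exact (continuousAt_cpow_const hslit).comp Complex.continuous_ofReal.continuousAt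
  -- the common a.e. bound on (Ioi 0)
  have hbnd : ∀ τ : ℝ, ∀ᵐ x ∂(volume.restrict (Set.Ioi (0:ℝ))),
      ‖PhiMB μ ν x τ * f x‖ ≤ ((1/(2*Real.pi)) * (K * M)) * (‖f x‖ * x^(-ν)) := by
    intro τ
    refine (ae_restrict_iff' measurableSet_Ioi).2 (Filter.Eventually.of_forall fun x hx => ?_)
    rw [mem_Ioi] at hx
    rw [norm_mul]
    calc ‖PhiMB μ ν x τ‖ * ‖f x‖
        ≤ ((1/(2*Real.pi)) * (K * M) * x^(-ν)) * ‖f x‖ :=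
          mul_le_mul_of_nonneg_right (hΦ τ x hx) (norm_nonneg _)
      _ = ((1/(2*Real.pi)) * (K * M)) * (‖f x‖ * x^(-ν)) := by ring
  have hint : ∀ τ > (0:ℝ), IntegrableOn (fun x : ℝ => PhiMB μ ν x τ * f x) (Set.Ioi 0) := by
    intro τ _
    exact Integrable.mono' (hf.const_mul _) ((hΦmeas τ).mul hfm) (hbnd τ)
  refine ⟨hint, fun τ hτ => ?_⟩
  have hconst : (1/(2*Real.pi)) * (K * M) =
      ((2:ℝ)^(-(2*ν)) / (Real.pi * Real.sqrt Real.pi)) * R * M := by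
    rw [hK]
    have h2 : (2:ℝ)^(1-2*ν) = 2 * (2:ℝ)^(-(2*ν)) := by
      rw [show (1-2*ν) = 1 + -(2*ν) by ring, Real.rpow_add two_pos, Real.rpow_one]
    rw [h2]
    have hsπ : Real.sqrt Real.pi ≠ 0 := (Real.sqrt_pos.2 Real.pi_pos).ne'
    field_simp
  calc ‖indexF μ ν f τ‖
      ≤ ∫ x in Set.Ioi (0:ℝ), ‖PhiMB μ ν x τ * f x‖ := by
        rw [indexF]; exact norm_integral_le_integral_norm _
    _ ≤ ∫ x in Set.Ioi (0:ℝ), ((1/(2*Real.pi)) * (K * M)) * (‖f x‖ * x^(-ν)) :=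
        integral_mono_of_nonneg (Filter.Eventually.of_forall fun x => norm_nonneg _)
          (hf.const_mul _) (hbnd τ)
    _ = ((1/(2*Real.pi)) * (K * M)) * ∫ x in Set.Ioi (0:ℝ), ‖f x‖ * x^(-ν) := by
        rw [integral_const_mul]
    _ = ((2:ℝ)^(-(2*ν)) / (Real.pi * Real.sqrt Real.pi)) * R * M *
        ∫ x in Set.Ioi (0:ℝ), ‖f x‖ * x^(-ν) := by rw [hconst]
    _ = _ := by rw [hR, hM, hGn]
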